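/- Let n be a positive integer, ζ_n a primitive n-th root of unity in ℂ, and let k, r be integers with k ≥ r and n > r > 0. Then Σ_{k ∈ I(k,r)} z̄_n(k; ζ_n) = Σ_{j=1}^{r} (1/n) · binom(n, j) · z̄_n(k+1-j; ζ_n), where I(k,r) denotes the set of indices of weight k and depth r. -/

import Mathlib

open Finset

/-- The set of tuples `(m_1,...,m_r)` with `n > m_1 > m_2 > ... > m_r > 0`. -/
def msets (n r : ℕ) : Finset (Fin r → Fin n) :=
  Finset.univ.filter fun m =>
    (∀ i j : Fin r, i < j → m j < m i) ∧ ∀ i, 0 < (m i : ℕ)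

/-- The set of tuples `(m_1,...,m_r)` with `n > m_1 ≥ m_2 ≥ ... ≥ m_r > 0`. -/
def msetsStar (n r : ℕ) : Finset (Fin r → Fin n) :=
  Finset.univ.filter fun m =>
    (∀ i j : Fin r, i ≤ j → m j ≤ m i) ∧ ∀ i, 0 < (m i : ℕ)

/-- The finite multiple harmonic q-series
`z_n(k_1,…,k_r; q) = Σ_{n > m_1 > … > m_r > 0} Π_i q^{(k_i-1)m_i}/[m_i]_q^{k_i}`,
where `[m]_q = (1-q^m)/(1-q)`. -/
noncomputable def z (n : ℕ) {r : ℕ} (k : Fin r → ℕ) (q : ℂ) : ℂ :=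
  ∑ m ∈ msets n r,
    ∏ i, q ^ ((k i - 1) * (m i : ℕ)) / ((1 - q ^ (m i : ℕ)) / (1 - q)) ^ (k i)

/-- The star version `z*_n(k; q)`, summed over `n > m_1 ≥ … ≥ m_r > 0`. -/
noncomputable def zstar (n : ℕ) {r : ℕ} (k : Fin r → ℕ) (q : ℂ) : ℂ :=
  ∑ m ∈ msetsStar n r,
    ∏ i, q ^ ((k i - 1) * (m i : ℕ)) / ((1 - q ^ (m i : ℕ)) / (1 - q)) ^ (k i)

/-- The modified value `z̄_n(k;q) = (1-q)^{-wt(k)} z_n(k;q)`. -/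
noncomputable def zbar (n : ℕ) {r : ℕ} (k : Fin r → ℕ) (q : ℂ) : ℂ :=
  (1 - q)⁻¹ ^ (∑ i, k i) * z n k q

/-- The modified star value `z̄*_n(k;q) = (1-q)^{-wt(k)} z*_n(k;q)`. -/
noncomputable def zstarbar (n : ℕ) {r : ℕ} (k : Fin r → ℕ) (q : ℂ) : ℂ :=
  (1 - q)⁻¹ ^ (∑ i, k i) * zstar n k q

/-- `I(k,r,s)`: the set of indices (tuples of positive integers) of weight `k`,
depth `r` and height `s`. -/
def indexSet3 (k r s : ℕ) : Finset (Fin r → ℕ) :=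
  (Finset.Nat.antidiagonalTuple r k).filter fun a =>
    (∀ i, 1 ≤ a i) ∧ (Finset.univ.filter fun i => 2 ≤ a i).card = s

/-- `I(k,r)`: the set of indices of weight `k` and depth `r`. -/
def indexSet2 (k r : ℕ) : Finset (Fin r → ℕ) :=
  (Finset.Nat.antidiagonalTuple r k).filter fun a => ∀ i, 1 ≤ a i

/-- The one-variable finite q-multiple polylogarithm
`L_{k_1,…,k_r}^{(n)}(t;q) = Σ_{n > m_1 > … > m_r > 0} t^{m_1} / Π_i (1-q^{m_i})^{k_i}`,
with `L_∅(t) = 1`. -/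
noncomputable def Lpoly (n : ℕ) {r : ℕ} (k : Fin r → ℕ) (q t : ℂ) : ℂ :=
  ∑ m ∈ msets n r,
    ∏ i : Fin r, (if i.val = 0 then t ^ (m i : ℕ) else 1) / (1 - q ^ (m i : ℕ)) ^ (k i)

/-- The star version `L*_{k_1,…,k_r}^{(n)}(t;q)`, summed over `n > m_1 ≥ … ≥ m_r > 0`. -/
noncomputable def LpolyStar (n : ℕ) {r : ℕ} (k : Fin r → ℕ) (q t : ℂ) : ℂ :=
  ∑ m ∈ msetsStar n r,
    ∏ i : Fin r, (if i.val = 0 then t ^ (m i : ℕ) else 1) / (1 - q ^ (m i : ℕ)) ^ (k i)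

open Polynomial

lemma geom_aux (x c : ℂ) (k : ℕ) : ∀ (M : ℕ), M ≤ k →
    (∑ t ∈ Icc 1 M, c^t * x^(k-t)) * (x - c) = c * x^k - c^(M+1) * x^(k-M) := by
  intro M
  induction M with
  | zero => intro _; simp
  | succ M ih =>
    intro hM
    have hins : Icc 1 (M+1) = insert (M+1) (Icc 1 M) := by
      ext t; simp [Finset.mem_Icc, Finset.mem_insert]; omega
    have hnm : (M+1) ∉ Icc 1 M := by simp
    rw [hins, Finset.sum_insert hnm, add_mul, ih (by omega)]
    have h1 : k - M = (k - (M+1)) + 1 := by omega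
    rw [h1, pow_succ, pow_succ]
    ring

lemma basis_coeff {ι : Type} [DecidableEq ι] (s : Finset ι) (v : ι → ℂ) (i : ι) (hi : i ∈ s) :
    (Lagrange.basis s v i).coeff (s.card - 1)
      = (∏ j ∈ s.erase i, (v i - v j))⁻¹ := by
  unfold Lagrange.basis Lagrange.basisDivisor
  rw [Finset.prod_mul_distrib, ← map_prod, ← Lagrange.nodal]
  rw [Polynomial.coeff_C_mul]
  have hmonic : (Lagrange.nodal (s.erase i) v).Monic := Lagrange.nodal_monic
  have hdeg : (Lagrange.nodal (s.erase i) v).natDegree = s.card - 1 := by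
    rw [Lagrange.natDegree_nodal, Finset.card_erase_of_mem hi]
  rw [← hdeg, hmonic.coeff_natDegree, mul_one, ← Finset.prod_inv_distrib]

lemma lagrange_aux {ι : Type} [DecidableEq ι] (s : Finset ι) (v : ι → ℂ)
    (hvs : Set.InjOn v ↑s) (d : ℕ) (hd : d < s.card) :
    ∑ i ∈ s, v i ^ d * (∏ j ∈ s.erase i, (v i - v j))⁻¹
      = if d = s.card - 1 then 1 else 0 := by
  have h : (X : ℂ[X])^d = Lagrange.interpolate s v fun i => (v i)^d := by
    have := Lagrange.eq_interpolate (f := (X : ℂ[X])^d) hvs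
      (by rw [Polynomial.degree_X_pow]; exact_mod_cast hd)
    simpa using this
  have h2 := congrArg (fun p => Polynomial.coeff p (s.card - 1)) h
  simp only [Lagrange.interpolate_apply, Polynomial.finset_sum_coeff,
    Polynomial.coeff_C_mul, Polynomial.coeff_X_pow] at h2
  rw [Finset.sum_congr rfl (fun i hi => by rw [basis_coeff s v i hi])] at h2
  rw [← h2]
  by_cases hcase : d = s.card - 1 <;> simp [hcase, eq_comm]

lemma mem_indexSet2 {k r : ℕ} {a : Fin r → ℕ} :
    a ∈ indexSet2 k r ↔ (∑ i, a i = k) ∧ ∀ i, 1 ≤ a i := by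
  simp [indexSet2, Finset.Nat.mem_antidiagonalTuple]

lemma indexSet2_decomp (k r : ℕ) (hk : r + 1 ≤ k) (f : (Fin (r+1) → ℕ) → ℂ) :
    ∑ a ∈ indexSet2 k (r+1), f a
      = ∑ t ∈ Icc 1 (k-r), ∑ b ∈ indexSet2 (k-t) r, f (Fin.cons t b) := by
  rw [Finset.sum_sigma']
  refine Finset.sum_bij' (fun a _ => (⟨a 0, Fin.tail a⟩ : Σ _ : ℕ, Fin r → ℕ))
    (fun p _ => Fin.cons p.1 p.2) ?_ ?_ ?_ ?_ ?_
  · intro a ha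
    rw [mem_indexSet2] at ha
    obtain ⟨hsum, hpos⟩ := ha
    rw [Fin.sum_univ_succ] at hsum
    have htail : ∑ i : Fin r, Fin.tail a i = k - a 0 := by
      simp only [Fin.tail]; omega
    have hge : (r : ℕ) ≤ ∑ i : Fin r, a i.succ := by
      calc (r : ℕ) = ∑ _i : Fin r, 1 := by simp
      _ ≤ ∑ i : Fin r, a i.succ := Finset.sum_le_sum fun i _ => hpos i.succ
    simp only [Finset.mem_sigma, Finset.mem_Icc, mem_indexSet2]
    exact ⟨⟨hpos 0, by omega⟩, htail, fun i => hpos i.succ⟩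
  · intro p hp
    simp only [Finset.mem_sigma, Finset.mem_Icc, mem_indexSet2] at hp
    obtain ⟨⟨h1, h2⟩, hsum, hpos⟩ := hp
    rw [mem_indexSet2, Fin.sum_univ_succ]
    constructor
    · simp only [Fin.cons_zero, Fin.cons_succ]; omega
    · intro i
      refine Fin.cases ?_ ?_ i
      · simpa using h1
      · intro j; simpa using hpos j
  · intro a _; exact Fin.cons_self_tail a
  · intro p _; ext : 1
    · rfl
    · simp [Fin.tail]
  · intro a _; rw [Fin.cons_self_tail]

lemma erase_succ_eq {r : ℕ} (i : Fin r) :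
    (univ : Finset (Fin (r+1))).erase i.succ
      = insert 0 ((univ.erase i).image Fin.succ) := by
  ext j
  refine Fin.cases ?_ ?_ j
  · simp [(Fin.succ_ne_zero i).symm, Fin.succ_ne_zero]
  · intro j'
    simp [Fin.succ_ne_zero, (Fin.succ_injective r).eq_iff, eq_comm]

lemma erase_zero_eq {r : ℕ} :
    (univ : Finset (Fin (r+1))).erase 0 = univ.image Fin.succ := by
  ext j
  refine Fin.cases ?_ ?_ j <;> simp [Fin.succ_ne_zero, eq_comm]

lemma prod_erase_succ {r : ℕ} (g : Fin (r+1) → ℂ) (i : Fin r) :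
    ∏ j ∈ ((univ : Finset (Fin (r+1))).erase i.succ), g j
      = g 0 * ∏ j ∈ univ.erase i, g j.succ := by
  rw [erase_succ_eq, Finset.prod_insert (by
    simp only [Finset.mem_image, Finset.mem_erase]
    rintro ⟨a, _, ha⟩
    exact Fin.succ_ne_zero a ha),
    Finset.prod_image (fun a _ b _ h => Fin.succ_injective r h)]

lemma prod_erase_zero {r : ℕ} (g : Fin (r+1) → ℂ) :
    ∏ j ∈ ((univ : Finset (Fin (r+1))).erase 0), g j = ∏ j : Fin r, g j.succ := by
  rw [erase_zero_eq, Finset.prod_image (fun a _ b _ h => Fin.succ_injective r h)]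

lemma compSum : ∀ (r : ℕ), 0 < r → ∀ (k : ℕ), r ≤ k → ∀ (u : Fin r → ℂ),
    Function.Injective u →
    ∑ a ∈ indexSet2 k r, ∏ i, u i ^ a i
      = ∑ i, u i ^ k * ∏ j ∈ univ.erase i, (u j / (u i - u j)) := by
  intro r
  induction r with
  | zero => omega
  | succ r ih =>
    intro _ k hk u hu
    rcases Nat.eq_zero_or_pos r with hr0 | hr0
    · subst hr0
      have hI : indexSet2 k 1 = {![k]} := by
        ext a
        simp only [mem_indexSet2, Finset.mem_singleton, Fin.sum_univ_one]
        constructor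
        · rintro ⟨h1, _⟩
          funext i
          rw [Fin.fin_one_eq_zero i]; simpa using h1
        · rintro rfl
          exact ⟨rfl, fun i => by rw [Fin.fin_one_eq_zero i]; simpa using hk⟩
      rw [hI, Finset.sum_singleton, Fin.prod_univ_one, Fin.sum_univ_one]
      have : (univ : Finset (Fin 1)).erase 0 = ∅ := by decide
      simp [this]
    · -- inductive step
      rw [indexSet2_decomp k r hk]
      have hXne : ∀ i : Fin r, u i.succ - u 0 ≠ 0 := by
        intro i h
        exact Fin.succ_ne_zero i (hu (sub_eq_zero.mp h))
      -- inner sums via IH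
      have step1 : ∀ t ∈ Icc 1 (k - r),
          ∑ b ∈ indexSet2 (k-t) r, ∏ i, u i ^ (Fin.cons t b i)
            = ∑ i : Fin r, (u 0 ^ t * (u i.succ)^(k-t))
                * ∏ j ∈ univ.erase i, (u j.succ / (u i.succ - u j.succ)) := by
        intro t ht
        rw [Finset.mem_Icc] at ht
        have hcons : ∀ b : Fin r → ℕ,
            ∏ i, u i ^ (Fin.cons t b i) = u 0 ^ t * ∏ i : Fin r, u i.succ ^ b i := by
          intro b; rw [Fin.prod_univ_succ]; simp
        rw [Finset.sum_congr rfl fun b _ => hcons b, ← Finset.mul_sum,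
          ih hr0 (k - t) (by omega) (fun i => u i.succ)
            (fun i j hij => Fin.succ_injective r (hu hij)),
          Finset.mul_sum]
        exact Finset.sum_congr rfl fun i _ => by ring
      rw [Finset.sum_congr rfl step1, Finset.sum_comm]
      -- geometric sum per i
      have geo : ∀ i : Fin r,
          ∑ t ∈ Icc 1 (k - r), u 0 ^ t * (u i.succ)^(k-t)
            = (u 0 * u i.succ ^ k - u 0 ^ (k-r+1) * u i.succ ^ r) / (u i.succ - u 0) := by
        intro i
        have hkk : k - (k - r) = r := by omega
        rw [eq_div_iff (hXne i), geom_aux (u i.succ) (u 0) k (k - r) (by omega), hkk]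
      have step2 : ∀ i : Fin r,
          ∑ t ∈ Icc 1 (k - r), (u 0 ^ t * (u i.succ)^(k-t))
              * ∏ j ∈ univ.erase i, (u j.succ / (u i.succ - u j.succ))
            = (u 0 * u i.succ ^ k - u 0 ^ (k-r+1) * u i.succ ^ r) / (u i.succ - u 0)
              * ∏ j ∈ univ.erase i, (u j.succ / (u i.succ - u j.succ)) := by
        intro i
        rw [← Finset.sum_mul, geo i]
      rw [Finset.sum_congr rfl fun i _ => step2 i]
      -- split each summand
      have split : ∀ i : Fin r,
          (u 0 * u i.succ ^ k - u 0 ^ (k-r+1) * u i.succ ^ r) / (u i.succ - u 0)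
              * ∏ j ∈ univ.erase i, (u j.succ / (u i.succ - u j.succ))
            = u i.succ ^ k * ∏ j ∈ (univ : Finset (Fin (r+1))).erase i.succ,
                (u j / (u i.succ - u j))
              - u 0 ^ (k-r+1) * (u i.succ ^ r / (u i.succ - u 0)
                  * ∏ j ∈ univ.erase i, (u j.succ / (u i.succ - u j.succ))) := by
        intro i
        rw [prod_erase_succ (fun j => u j / (u i.succ - u j)) i]
        field_simp
      rw [Finset.sum_congr rfl fun i _ => split i, Finset.sum_sub_distrib]
      rw [Fin.sum_univ_succ
        (f := fun i => u i ^ k * ∏ j ∈ univ.erase i, (u j / (u i - u j)))]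
      have lag := lagrange_aux (univ : Finset (Fin (r+1))) u
        (Set.injOn_of_injective hu) (r - 1)
        (by simp [Finset.card_univ])
      rw [Finset.card_univ, Fintype.card_fin] at lag
      rw [if_neg (by omega), Fin.sum_univ_succ] at lag
      -- lag : u 0 ^ (r-1) * (∏ j ∈ erase 0, (u 0 - u j))⁻¹ + ∑ i', ... = 0
      have key : ∑ i : Fin r, u 0 ^ (k-r+1) * (u i.succ ^ r / (u i.succ - u 0)
            * ∏ j ∈ univ.erase i, (u j.succ / (u i.succ - u j.succ)))
          = - (u 0 ^ k * ∏ j ∈ (univ : Finset (Fin (r+1))).erase 0, (u j / (u 0 - u j))) := by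
        have per : ∀ i : Fin r,
            u i.succ ^ r / (u i.succ - u 0)
              * ∏ j ∈ univ.erase i, (u j.succ / (u i.succ - u j.succ))
            = (∏ j : Fin r, u j.succ)
              * (u i.succ ^ (r-1)
                * (∏ j ∈ (univ : Finset (Fin (r+1))).erase i.succ, (u i.succ - u j))⁻¹) := by
          intro i
          rw [prod_erase_succ (fun j => u i.succ - u j) i,
            Finset.prod_div_distrib,
            ← Finset.mul_prod_erase univ (fun j => u j.succ) (Finset.mem_univ i)]
          have hpow : u i.succ ^ r = u i.succ ^ (r-1) * u i.succ := by
            rw [← pow_succ]; congr 1; omega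
          rw [hpow]
          field_simp
        have hfac : ∀ i : Fin r, u 0 ^ (k-r+1) * (u i.succ ^ r / (u i.succ - u 0)
              * ∏ j ∈ univ.erase i, (u j.succ / (u i.succ - u j.succ)))
            = (u 0 ^ (k-r+1) * ∏ j : Fin r, u j.succ)
              * (u i.succ ^ (r-1)
                * (∏ j ∈ (univ : Finset (Fin (r+1))).erase i.succ, (u i.succ - u j))⁻¹) := by
          intro i; rw [per i]; ring
        rw [Finset.sum_congr rfl fun i _ => hfac i, ← Finset.mul_sum,
          eq_neg_of_add_eq_zero_right lag,
          prod_erase_zero (fun j => u j / (u 0 - u j)),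
          prod_erase_zero (fun j => u 0 - u j),
          Finset.prod_div_distrib]
        have hpow : u 0 ^ (k-r+1) * u 0 ^ (r-1) = u 0 ^ k := by
          rw [← pow_add]; congr 1; omega
        rw [div_eq_mul_inv, ← hpow]
        ring
      rw [key]
      ring

lemma zbar_eq (n : ℕ) {r : ℕ} (a : Fin r → ℕ) (q : ℂ) (hq : q ≠ 1) :
    zbar n a q = ∑ m ∈ msets n r,
      ∏ i, q ^ ((a i - 1) * (m i : ℕ)) / (1 - q ^ (m i : ℕ)) ^ (a i) := by
  have h1q : (1 : ℂ) - q ≠ 0 := sub_ne_zero.mpr (Ne.symm hq)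
  rw [zbar, z, Finset.mul_sum]
  refine Finset.sum_congr rfl fun m _ => ?_
  have per : ∀ i : Fin r,
      q ^ ((a i - 1) * (m i : ℕ)) / ((1 - q ^ (m i : ℕ)) / (1 - q)) ^ (a i)
        = (1-q) ^ (a i) * (q ^ ((a i - 1) * (m i : ℕ)) / (1 - q ^ (m i : ℕ)) ^ (a i)) := by
    intro i
    rw [div_pow, div_div_eq_mul_div, mul_comm, mul_div_assoc]
  rw [Finset.prod_congr rfl fun i _ => per i, Finset.prod_mul_distrib,
    Finset.prod_pow_eq_pow_sum, ← mul_assoc, ← mul_pow, inv_mul_cancel₀ h1q, one_pow, one_mul]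

lemma sum_msets_one (n : ℕ) (h : ℕ → ℂ) :
    ∑ m ∈ msets n 1, h (m 0 : ℕ) = ∑ c ∈ Ico 1 n, h c := by
  refine Finset.sum_bij' (fun m _ => (m 0 : ℕ))
    (fun c hc => fun _ => (⟨c, (Finset.mem_Ico.mp hc).2⟩ : Fin n)) ?_ ?_ ?_ ?_ ?_
  · intro m hm
    simp only [msets, Finset.mem_filter] at hm
    exact Finset.mem_Ico.mpr ⟨hm.2.2 0, (m 0).isLt⟩
  · intro c hc
    simp only [msets, Finset.mem_filter]
    refine ⟨Finset.mem_univ _, fun i j hij => absurd hij (by omega), fun i => ?_⟩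
    exact (Finset.mem_Ico.mp hc).1
  · intro m hm
    funext i
    have : i = 0 := Subsingleton.elim i 0
    subst this; rfl
  · intro c hc; rfl
  · intro m hm; rfl

lemma msets_strictAnti {n r : ℕ} {m : Fin r → Fin n} (hm : m ∈ msets n r) :
    ∀ i j : Fin r, i < j → m j < m i := by
  simp only [msets, Finset.mem_filter] at hm; exact hm.2.1

lemma msets_pos {n r : ℕ} {m : Fin r → Fin n} (hm : m ∈ msets n r) :
    ∀ i, 0 < (m i : ℕ) := by
  simp only [msets, Finset.mem_filter] at hm; exact hm.2.2

lemma msets_inj {n r : ℕ} {m : Fin r → Fin n} (hm : m ∈ msets n r) :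
    Function.Injective fun i => ((m i : ℕ)) := by
  intro i j hij
  simp only at hij
  rcases lt_trichotomy i j with h | h | h
  · exact absurd hij (by have := msets_strictAnti hm i j h; omega)
  · exact h
  · exact absurd hij (by have := msets_strictAnti hm j i h; omega)

lemma sum_msets_subsets (n r : ℕ) (H : Finset ℕ → ℂ) :
    ∑ m ∈ msets n r, H (image (fun i => ((m i : ℕ))) univ)
      = ∑ T ∈ powersetCard r (Ico 1 n), H T := by
  have card_im : ∀ m ∈ msets n r, (image (fun i => ((m i : ℕ))) univ).card = r := by
    intro m hm
    rw [Finset.card_image_of_injective _ (msets_inj hm), Finset.card_univ, Fintype.card_fin]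
  refine Finset.sum_bij' (fun m _ => image (fun i => ((m i : ℕ))) univ)
    (fun T hT => fun i => (⟨T.orderEmbOfFin (Finset.mem_powersetCard.mp hT).2 i.rev,
      by
        have hmem := Finset.orderEmbOfFin_mem T (Finset.mem_powersetCard.mp hT).2 i.rev
        have := (Finset.mem_powersetCard.mp hT).1 hmem
        exact (Finset.mem_Ico.mp this).2⟩ : Fin n)) ?_ ?_ ?_ ?_ ?_
  · intro m hm
    rw [Finset.mem_powersetCard]
    refine ⟨?_, card_im m hm⟩
    intro x hx
    rw [Finset.mem_image] at hx
    obtain ⟨i, _, rfl⟩ := hx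
    exact Finset.mem_Ico.mpr ⟨msets_pos hm i, (m i).isLt⟩
  · intro T hT
    simp only [msets, Finset.mem_filter]
    obtain ⟨hsub, hcard⟩ := Finset.mem_powersetCard.mp hT
    refine ⟨Finset.mem_univ _, fun i j hij => ?_, fun i => ?_⟩
    · have : (j : Fin r).rev < i.rev := by
        rw [Fin.rev_lt_rev]; exact hij
      exact (T.orderEmbOfFin hcard).strictMono this
    · have hmem := Finset.orderEmbOfFin_mem T hcard i.rev
      exact (Finset.mem_Ico.mp (hsub hmem)).1
  · -- left inverse
    intro m hm
    have hmemT : ∀ x : Fin r, (m x : ℕ) ∈ image (fun i => ((m i : ℕ))) univ := by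
      intro x; exact Finset.mem_image_of_mem _ (Finset.mem_univ x)
    have gen : ∀ (p : (image (fun i => ((m i : ℕ))) univ).card = r) (i : Fin r),
        ((image (fun i => ((m i : ℕ))) univ).orderEmbOfFin p) i.rev = (m i : ℕ) := by
      intro p i
      have huniq := Finset.orderEmbOfFin_unique (f := fun j : Fin r => ((m j.rev : ℕ)))
        p (fun x => hmemT x.rev)
        (fun a b hab => by
          have := msets_strictAnti hm b.rev a.rev (by rw [Fin.rev_lt_rev]; exact hab)
          exact this)
      have := congrFun huniq i.rev
      simp only [Fin.rev_rev] at this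
      exact this.symm
    funext i
    exact Fin.ext (gen _ i)
  · -- right inverse
    intro T hT
    obtain ⟨hsub, hcard⟩ := Finset.mem_powersetCard.mp hT
    apply Finset.eq_of_subset_of_card_le
    · intro x hx
      rw [Finset.mem_image] at hx
      obtain ⟨i, _, rfl⟩ := hx
      exact Finset.orderEmbOfFin_mem T hcard i.rev
    · have hinj : Function.Injective (fun i : Fin r =>
          ((⟨(T.orderEmbOfFin hcard) i.rev, by
            have hmem := Finset.orderEmbOfFin_mem T hcard i.rev
            exact (Finset.mem_Ico.mp (hsub hmem)).2⟩ : Fin n) : ℕ)) := by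
        intro a b hab
        simp only at hab
        have : a.rev = b.rev := (T.orderEmbOfFin hcard).injective (by exact_mod_cast hab)
        simpa using congrArg Fin.rev this
      have himg : (Finset.image (fun i : Fin r =>
          ((⟨(T.orderEmbOfFin hcard) i.rev, by
            have hmem := Finset.orderEmbOfFin_mem T hcard i.rev
            exact (Finset.mem_Ico.mp (hsub hmem)).2⟩ : Fin n) : ℕ)) univ).card = r := by
        rw [Finset.card_image_of_injective _ hinj, Finset.card_univ, Fintype.card_fin]
      exact le_of_eq (hcard.trans himg.symm)
  · intro m hm; rfl

lemma sum_pick (A : Finset ℕ) (r : ℕ) (F : ℕ → Finset ℕ → ℂ) :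
    ∑ T ∈ powersetCard (r+1) A, ∑ c ∈ T, F c (T.erase c)
      = ∑ c ∈ A, ∑ S ∈ powersetCard r (A.erase c), F c S := by
  rw [Finset.sum_sigma', Finset.sum_sigma']
  refine Finset.sum_bij' (fun p _ => (⟨p.2, p.1.erase p.2⟩ : Σ _ : ℕ, Finset ℕ))
    (fun p _ => (⟨insert p.1 p.2, p.1⟩ : Σ _ : Finset ℕ, ℕ)) ?_ ?_ ?_ ?_ ?_
  · rintro ⟨T, c⟩ hp
    simp only [Finset.mem_sigma, Finset.mem_powersetCard] at hp ⊢
    obtain ⟨⟨hsub, hcard⟩, hc⟩ := hp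
    refine ⟨hsub hc, ?_, ?_⟩
    · intro x hx
      rw [Finset.mem_erase] at hx ⊢
      exact ⟨hx.1, hsub hx.2⟩
    · rw [Finset.card_erase_of_mem hc, hcard]
      omega
  · rintro ⟨c, S⟩ hp
    simp only [Finset.mem_sigma, Finset.mem_powersetCard] at hp ⊢
    obtain ⟨hc, hsub, hcard⟩ := hp
    have hcS : c ∉ S := fun h => (Finset.mem_erase.mp (hsub h)).1 rfl
    refine ⟨⟨?_, ?_⟩, Finset.mem_insert_self c S⟩
    · intro x hx
      rcases Finset.mem_insert.mp hx with rfl | hx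
      · exact hc
      · exact Finset.mem_of_mem_erase (hsub hx)
    · rw [Finset.card_insert_of_notMem hcS, hcard]
  · rintro ⟨T, c⟩ hp
    simp only [Finset.mem_sigma] at hp
    have : insert c (T.erase c) = T := Finset.insert_erase hp.2
    show (⟨insert c (T.erase c), c⟩ : Σ _ : Finset ℕ, ℕ) = ⟨T, c⟩
    rw [this]
  · rintro ⟨c, S⟩ hp
    simp only [Finset.mem_sigma, Finset.mem_powersetCard] at hp
    have hcS : c ∉ S := fun h => (Finset.mem_erase.mp (hp.2.1 h)).1 rfl
    have : (insert c S).erase c = S := Finset.erase_insert hcS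
    show (⟨c, (insert c S).erase c⟩ : Σ _ : ℕ, Finset ℕ) = ⟨c, S⟩
    rw [this]
  · rintro ⟨T, c⟩ _; rfl

lemma root_factorization (n : ℕ) (hn : 0 < n) (ζ : ℂ) (hζ : IsPrimitiveRoot ζ n) (y : ℂ) :
    y ^ n - 1 = ∏ i ∈ range n, (y - ζ ^ i) := by
  have himg : Finset.image (fun i => ζ ^ i) (range n) = Polynomial.nthRootsFinset n (1 : ℂ) := by
    apply Finset.eq_of_subset_of_card_le
    · intro x hx
      rw [Finset.mem_image] at hx
      obtain ⟨i, _, rfl⟩ := hx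
      rw [Polynomial.mem_nthRootsFinset hn (1 : ℂ), ← pow_mul, mul_comm, pow_mul, hζ.pow_eq_one,
        one_pow]
    · rw [hζ.card_nthRootsFinset, Finset.card_image_of_injOn hζ.injOn_pow,
        Finset.card_range]
  have h := congrArg (Polynomial.eval y) (X_pow_sub_one_eq_prod hn hζ)
  simp only [Polynomial.eval_sub, Polynomial.eval_pow, Polynomial.eval_X,
    Polynomial.eval_one, Polynomial.eval_prod, Polynomial.eval_sub, Polynomial.eval_C] at h
  rw [h, ← himg, Finset.prod_image (fun a ha b hb hab => hζ.injOn_pow ha hb hab)]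

lemma perC (n : ℕ) (hn : 0 < n) (ζ : ℂ) (hζ : IsPrimitiveRoot ζ n) (c : ℕ)
    (hc1 : 1 ≤ c) (hcn : c < n) (r : ℕ) (hr : 0 < r) (hrn : r < n) :
    ∑ S ∈ powersetCard (r-1) ((Ico 1 n).erase c), ∏ a ∈ S, ((1 - ζ^c)/(ζ^c - ζ^a))
      = (∑ j ∈ Icc 1 r, (n.choose j : ℂ) * (ζ^c)^(n-j) * (1-ζ^c)^j)
        / ((n:ℂ) * (ζ^c)^(n-1) * (1-ζ^c)) := by
  set Q : ℂ := ζ ^ c with hQdef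
  set w : ℂ := 1 - Q with hwdef
  set A : Finset ℕ := (Ico 1 n).erase c with hAdef
  have hζ0 : ζ ≠ 0 := hζ.ne_zero hn.ne'
  have hQ0 : Q ≠ 0 := pow_ne_zero _ hζ0
  have hQ1 : Q ≠ 1 := hζ.pow_ne_one_of_pos_of_lt (by omega) hcn
  have hw0 : w ≠ 0 := sub_ne_zero.mpr (Ne.symm hQ1)
  have hb0 : ∀ a ∈ A, Q - ζ^a ≠ 0 := by
    intro a ha
    rw [hAdef, Finset.mem_erase, Finset.mem_Ico] at ha
    refine sub_ne_zero.mpr fun h => ha.1 ?_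
    exact (hζ.injOn_pow (Finset.mem_coe.mpr (Finset.mem_range.mpr ha.2.2))
      (Finset.mem_coe.mpr (Finset.mem_range.mpr hcn)) h.symm).symm ▸ rfl
  set P : ℂ[X] := ∏ a ∈ A, (C w * X + C (Q - ζ^a)) with hPdef
  set d : ℂ := (Q - 1) * w with hddef
  have hd0 : d ≠ 0 := mul_ne_zero (sub_ne_zero.mpr hQ1) hw0
  -- the key polynomial identity
  have E : C d * (X * ((1 - X) * P)) = (C w * X + C Q)^n - 1 := by
    apply Polynomial.funext
    intro t
    simp only [Polynomial.eval_mul, Polynomial.eval_add, Polynomial.eval_sub,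
      Polynomial.eval_C, Polynomial.eval_X, Polynomial.eval_one, Polynomial.eval_pow,
      Polynomial.eval_prod, hPdef]
    rw [root_factorization n hn ζ hζ (w * t + Q)]
    have hsplit0 : range n = insert 0 (Ico 1 n) := by
      ext x; simp [Finset.mem_Ico]; omega
    have hsplitc : Ico 1 n = insert c A := by
      rw [hAdef, Finset.insert_erase (Finset.mem_Ico.mpr ⟨hc1, hcn⟩)]
    rw [hsplit0, Finset.prod_insert (by simp), hsplitc,
      Finset.prod_insert (by simp [hAdef]), pow_zero]
    have : ∀ a ∈ A, w * t + Q - ζ^a = w * t + (Q - ζ^a) := fun a _ => by ring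
    rw [Finset.prod_congr rfl this]
    have hw1 : w * t + Q - 1 = (Q - 1) * (1 - t) := by rw [hwdef]; ring
    have hwQ : w * t + Q - Q = w * t := by ring
    rw [hw1, hwQ]
    ring
  -- coefficients of RHS
  have coeffY : ∀ j : ℕ, j ≤ n →
      ((C w * X + C Q)^n).coeff j = (n.choose j : ℂ) * Q^(n-j) * w^j := by
    intro j hj
    have hY : C w * X + C Q = C w * (X + C (Q / w)) := by
      rw [mul_add, ← Polynomial.C_mul, mul_div_cancel₀ _ hw0]
    rw [hY, mul_pow, ← Polynomial.C_pow, Polynomial.coeff_C_mul,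
      Polynomial.coeff_X_add_C_pow]
    have hws : w^n = w^(n-j) * w^j := by rw [← pow_add]; congr 1; omega
    rw [hws, div_pow]
    field_simp
  -- coefficient recurrence
  have hcoeff : ∀ s : ℕ, 1 ≤ s → s ≤ n →
      d * (P.coeff (s-1) - (if s = 1 then 0 else P.coeff (s-2)))
        = (n.choose s : ℂ) * Q^(n-s) * w^s := by
    intro s hs1 hsn
    obtain ⟨s', rfl⟩ : ∃ s', s = s' + 1 := ⟨s-1, by omega⟩
    have hE := congrArg (fun p => Polynomial.coeff p (s' + 1)) E
    simp only [Polynomial.coeff_C_mul, Polynomial.coeff_sub, Polynomial.coeff_one,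
      Polynomial.coeff_X_mul] at hE
    rw [sub_mul, one_mul, Polynomial.coeff_sub] at hE
    rw [coeffY (s'+1) hsn] at hE
    simp only [Nat.add_sub_cancel]
    rcases Nat.eq_zero_or_pos s' with rfl | hs'
    · simp only [if_pos rfl]
      rw [show ((X : ℂ[X]) * P).coeff 0 = 0 from by
        rw [Polynomial.mul_coeff_zero, Polynomial.coeff_X_zero, zero_mul]] at hE
      simpa using hE
    · rw [if_neg (by omega)]
      obtain ⟨s'', rfl⟩ : ∃ s'', s' = s'' + 1 := ⟨s'-1, by omega⟩
      rw [Polynomial.coeff_X_mul] at hE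
      simpa using hE
  -- partial sums
  have main : ∀ s : ℕ, 1 ≤ s → s ≤ n → d * P.coeff (s-1)
      = ∑ j ∈ Icc 1 s, (n.choose j : ℂ) * Q^(n-j) * w^j := by
    intro s
    induction s with
    | zero => omega
    | succ s ih =>
      intro _ hsn
      rcases Nat.eq_zero_or_pos s with rfl | hs
      · have h := hcoeff 1 le_rfl (by omega)
        rw [if_pos rfl] at h
        simpa using h
      · have h := hcoeff (s+1) (by omega) hsn
        rw [if_neg (by omega)] at h
        have ih' := ih (by omega) (by omega)
        have hins : Icc 1 (s+1) = insert (s+1) (Icc 1 s) := by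
          ext x; simp [Finset.mem_Icc]; omega
        rw [hins, Finset.sum_insert (by simp), ← ih']
        simp only [Nat.add_sub_cancel] at h ⊢
        have hss : s + 1 - 2 = s - 1 := by omega
        rw [hss] at h
        linear_combination h
  -- expansion of P.coeff (r-1)
  have Pexp : P.coeff (r-1)
      = ∑ S ∈ powersetCard (r-1) A, w^(r-1) * ∏ a ∈ A \ S, (Q - ζ^a) := by
    rw [hPdef, Finset.prod_add]
    have term : ∀ t ∈ A.powerset,
        ((∏ _a ∈ t, (C w * X)) * ∏ a ∈ A \ t, C (Q - ζ^a)).coeff (r-1)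
          = if t.card = r-1 then w^(r-1) * ∏ a ∈ A \ t, (Q - ζ^a) else 0 := by
      intro t _
      rw [Finset.prod_const, mul_pow, ← Polynomial.C_pow, ← map_prod, mul_comm,
        ← mul_assoc, ← Polynomial.C_mul, Polynomial.coeff_C_mul, Polynomial.coeff_X_pow]
      by_cases h : t.card = r-1
      · rw [if_pos h, if_pos h.symm, mul_one, h, mul_comm]
      · rw [if_neg h, if_neg (fun hh => h hh.symm), mul_zero]
    rw [Polynomial.finset_sum_coeff, Finset.sum_congr rfl term, Finset.sum_ite,
      Finset.sum_const_zero, add_zero, powersetCard_eq_filter]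
  -- constant coefficient
  have P0 : P.coeff 0 = ∏ a ∈ A, (Q - ζ^a) := by
    rw [Polynomial.coeff_zero_eq_eval_zero, hPdef, Polynomial.eval_prod]
    exact Finset.prod_congr rfl fun a _ => by simp
  set B : ℂ := ∏ a ∈ A, (Q - ζ^a) with hBdef
  have hB0 : B ≠ 0 := Finset.prod_ne_zero_iff.mpr hb0
  have hdB : d * B = (n:ℂ) * Q^(n-1) * w := by
    have h := main 1 le_rfl (by omega)
    simpa [P0, Nat.choose_one_right] using h
  -- final computation
  have perS : ∀ S ∈ powersetCard (r-1) A,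
      ∏ a ∈ S, ((1 - ζ^c)/(ζ^c - ζ^a))
        = (w^(r-1) * ∏ a ∈ A \ S, (Q - ζ^a)) / B := by
    intro S hS
    simp only [← hQdef, ← hwdef]
    obtain ⟨hsub, hcard⟩ := Finset.mem_powersetCard.mp hS
    have hprod : (∏ a ∈ A \ S, (Q - ζ^a)) * ∏ a ∈ S, (Q - ζ^a) = B :=
      Finset.prod_sdiff hsub
    have hSne : (∏ a ∈ S, (Q - ζ^a)) ≠ 0 :=
      Finset.prod_ne_zero_iff.mpr fun a ha => hb0 a (hsub ha)
    rw [Finset.prod_div_distrib, Finset.prod_const, hcard]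
    rw [eq_div_iff hB0, ← hprod]
    rw [div_mul_eq_mul_div, div_eq_iff hSne]
    ring
  rw [Finset.sum_congr rfl perS, ← Finset.sum_div, ← Pexp, ← hdB,
    ← main r hr (by omega), div_eq_div_iff hB0 (mul_ne_zero hd0 hB0)]
  ring

lemma perm_step (n : ℕ) (hn : 0 < n) (ζ : ℂ) (hζ : IsPrimitiveRoot ζ n)
    (k r : ℕ) (hkr : r ≤ k) (hr : 0 < r)
    (m : Fin r → Fin n) (hm : m ∈ msets n r) :
    ∑ a ∈ indexSet2 k r, ∏ i, ζ^((a i - 1)*(m i:ℕ))/(1-ζ^(m i:ℕ))^(a i)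
      = ∑ cv ∈ image (fun i => ((m i : ℕ))) univ,
          (ζ^((k-1)*cv) / (1 - ζ^cv)^k
            * ∏ b ∈ (image (fun i => ((m i : ℕ))) univ).erase cv,
                ((1-ζ^cv)/(ζ^cv - ζ^b))) := by
  have hζ0 : ζ ≠ 0 := hζ.ne_zero hn.ne'
  have hx0 : ∀ i : Fin r, ζ ^ (m i : ℕ) ≠ 0 := fun i => pow_ne_zero _ hζ0
  have hx1 : ∀ i : Fin r, 1 - ζ ^ (m i : ℕ) ≠ 0 := fun i => sub_ne_zero.mpr
    (Ne.symm (hζ.pow_ne_one_of_pos_of_lt (msets_pos hm i).ne' (m i).isLt))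
  have hxinj : ∀ i j : Fin r, ζ ^ (m i : ℕ) = ζ ^ (m j : ℕ) → i = j := by
    intro i j hij
    exact msets_inj hm (hζ.injOn_pow (by simp [(m i).isLt]) (by simp [(m j).isLt]) hij)
  have huinj : Function.Injective (fun i : Fin r => ζ^(m i:ℕ)/(1 - ζ^(m i:ℕ))) := by
    intro i j hij
    apply hxinj
    simp only at hij
    rw [div_eq_div_iff (hx1 i) (hx1 j)] at hij
    linear_combination hij
  have stepa : ∀ a ∈ indexSet2 k r,
      ∏ i, ζ^((a i - 1)*(m i:ℕ))/(1-ζ^(m i:ℕ))^(a i)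
        = (∏ i, (ζ^(m i:ℕ))⁻¹) * ∏ i, (ζ^(m i:ℕ)/(1 - ζ^(m i:ℕ)))^(a i) := by
    intro a ha
    rw [← Finset.prod_mul_distrib]
    refine Finset.prod_congr rfl fun i _ => ?_
    have hai : 1 ≤ a i := (mem_indexSet2.mp ha).2 i
    have hxp : ζ^((a i - 1)*(m i:ℕ)) = (ζ^(m i:ℕ))^(a i) * (ζ^(m i:ℕ))⁻¹ := by
      rw [mul_comm, pow_mul]
      have h2 : (ζ^(m i:ℕ))^(a i) = (ζ^(m i:ℕ))^(a i - 1) * ζ^(m i:ℕ) := by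
        rw [← pow_succ]; congr 1; omega
      rw [h2, mul_assoc, mul_inv_cancel₀ (hx0 i), mul_one]
    rw [hxp]
    simp only [div_pow]
    field_simp
  rw [Finset.sum_congr rfl stepa, ← Finset.mul_sum,
    compSum r hr k hkr _ huinj, Finset.mul_sum]
  rw [Finset.sum_image (fun i _ j _ h => msets_inj hm h)]
  refine Finset.sum_congr rfl fun i _ => ?_
  have herase : ((image (fun i => ((m i : ℕ))) univ).erase ((m i : ℕ)))
      = image (fun j => ((m j : ℕ))) (univ.erase i) := by
    rw [← Finset.image_erase (msets_inj hm)]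
  rw [herase, Finset.prod_image (fun a _ b _ h => msets_inj hm h)]
  have hprod : ∀ j ∈ univ.erase i,
      (ζ^(m j:ℕ)/(1-ζ^(m j:ℕ)))
          / (ζ^(m i:ℕ)/(1-ζ^(m i:ℕ)) - ζ^(m j:ℕ)/(1-ζ^(m j:ℕ)))
        = ζ^(m j : ℕ) * ((1-ζ^(m i:ℕ))/(ζ^(m i:ℕ) - ζ^(m j:ℕ))) := by
    intro j hj
    have hij : i ≠ j := fun h => (Finset.mem_erase.mp hj).1 h.symm
    have hxij : ζ^(m i:ℕ) - ζ^(m j:ℕ) ≠ 0 :=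
      sub_ne_zero.mpr fun h => hij (hxinj i j h)
    have hde : ζ^(m i:ℕ)/(1-ζ^(m i:ℕ)) - ζ^(m j:ℕ)/(1-ζ^(m j:ℕ))
        = (ζ^(m i:ℕ) - ζ^(m j:ℕ))/((1 - ζ^(m i:ℕ)) * (1 - ζ^(m j:ℕ))) := by
      rw [div_sub_div _ _ (hx1 i) (hx1 j)]
      congr 1
      ring
    rw [hde, div_div_eq_mul_div, div_mul_eq_mul_div, div_div, ← mul_div_assoc,
      div_eq_div_iff (mul_ne_zero (hx1 j) hxij) hxij]
    ring
  rw [Finset.prod_congr rfl hprod, Finset.prod_mul_distrib]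
  have hinv : (∏ l, (ζ^(m l:ℕ))⁻¹) * ∏ j ∈ univ.erase i, ζ^(m j:ℕ)
      = (ζ^(m i:ℕ))⁻¹ := by
    rw [Finset.prod_inv_distrib,
      ← Finset.mul_prod_erase univ (fun l => ζ^(m l:ℕ)) (Finset.mem_univ i)]
    have hpe : (∏ j ∈ univ.erase i, ζ^(m j:ℕ)) ≠ 0 :=
      Finset.prod_ne_zero_iff.mpr fun j _ => hx0 j
    rw [mul_inv, mul_assoc, inv_mul_cancel₀ hpe, mul_one]
  have hz : ζ^((k-1)*(m i:ℕ)) = (ζ^(m i:ℕ))^k * (ζ^(m i:ℕ))⁻¹ := by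
    rw [mul_comm, pow_mul]
    have h2 : (ζ^(m i:ℕ))^k = (ζ^(m i:ℕ))^(k - 1) * ζ^(m i:ℕ) := by
      rw [← pow_succ]; congr 1; omega
    rw [h2, mul_assoc, mul_inv_cancel₀ (hx0 i), mul_one]
  rw [hz, ← hinv, div_pow]
  ring

/-- the sum formula
`Σ_{k ∈ I(k,r)} z̄_n(k;ζ_n) = Σ_{j=1}^r (1/n)·C(n,j)·z̄_n(k+1-j;ζ_n)` for
`k ≥ r` and `n > r > 0`. -/
theorem zbar_sum_formula (n : ℕ) (hn : 0 < n) (ζ : ℂ) (hζ : IsPrimitiveRoot ζ n)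
    (k r : ℕ) (hkr : r ≤ k) (hr : 0 < r) (hrn : r < n) :
    ∑ a ∈ indexSet2 k r, zbar n a ζ =
      ∑ j ∈ Finset.Icc 1 r,
        (1 / (n : ℂ)) * (n.choose j : ℂ) * zbar n (fun _ : Fin 1 => k + 1 - j) ζ := by
  have hn1 : 1 < n := lt_of_le_of_lt hr hrn
  have hζ1 : ζ ≠ 1 := hζ.ne_one hn1
  have hζ0 : ζ ≠ 0 := hζ.ne_zero hn.ne'
  have hx0 : ∀ cv : ℕ, ζ ^ cv ≠ 0 := fun cv => pow_ne_zero _ hζ0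
  have hx1 : ∀ cv : ℕ, 0 < cv → cv < n → 1 - ζ ^ cv ≠ 0 := fun cv h1 h2 =>
    sub_ne_zero.mpr (Ne.symm (hζ.pow_ne_one_of_pos_of_lt h1.ne' h2))
  -- LHS transformation
  have LHS1 : ∑ a ∈ indexSet2 k r, zbar n a ζ
      = ∑ cv ∈ Ico 1 n, ∑ S ∈ powersetCard (r-1) ((Ico 1 n).erase cv),
          (ζ^((k-1)*cv) / (1 - ζ^cv)^k * ∏ b ∈ S, ((1-ζ^cv)/(ζ^cv - ζ^b))) := by
    calc ∑ a ∈ indexSet2 k r, zbar n a ζ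
        = ∑ a ∈ indexSet2 k r, ∑ m ∈ msets n r,
            ∏ i, ζ ^ ((a i - 1) * (m i : ℕ)) / (1 - ζ ^ (m i : ℕ)) ^ (a i) :=
          Finset.sum_congr rfl fun a _ => zbar_eq n a ζ hζ1
      _ = ∑ m ∈ msets n r, ∑ a ∈ indexSet2 k r,
            ∏ i, ζ ^ ((a i - 1) * (m i : ℕ)) / (1 - ζ ^ (m i : ℕ)) ^ (a i) :=
          Finset.sum_comm
      _ = ∑ m ∈ msets n r, ∑ cv ∈ image (fun i => ((m i : ℕ))) univ,
            (ζ^((k-1)*cv) / (1 - ζ^cv)^k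
              * ∏ b ∈ (image (fun i => ((m i : ℕ))) univ).erase cv,
                  ((1-ζ^cv)/(ζ^cv - ζ^b))) :=
          Finset.sum_congr rfl fun m hm => perm_step n hn ζ hζ k r hkr hr m hm
      _ = ∑ T ∈ powersetCard r (Ico 1 n), ∑ cv ∈ T,
            (ζ^((k-1)*cv) / (1 - ζ^cv)^k
              * ∏ b ∈ T.erase cv, ((1-ζ^cv)/(ζ^cv - ζ^b))) :=
          sum_msets_subsets n r (fun T => ∑ cv ∈ T,
            (ζ^((k-1)*cv) / (1 - ζ^cv)^k
              * ∏ b ∈ T.erase cv, ((1-ζ^cv)/(ζ^cv - ζ^b))))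
      _ = ∑ cv ∈ Ico 1 n, ∑ S ∈ powersetCard (r-1) ((Ico 1 n).erase cv),
            (ζ^((k-1)*cv) / (1 - ζ^cv)^k * ∏ b ∈ S, ((1-ζ^cv)/(ζ^cv - ζ^b))) := by
          have hpick := sum_pick (Ico 1 n) (r-1)
            (fun cv S => ζ^((k-1)*cv) / (1 - ζ^cv)^k
              * ∏ b ∈ S, ((1-ζ^cv)/(ζ^cv - ζ^b)))
          rw [show r - 1 + 1 = r from by omega] at hpick
          exact hpick
  -- RHS transformation
  have RHS1 : ∑ j ∈ Finset.Icc 1 r,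
        (1 / (n : ℂ)) * (n.choose j : ℂ) * zbar n (fun _ : Fin 1 => k + 1 - j) ζ
      = ∑ cv ∈ Ico 1 n, ∑ j ∈ Icc 1 r,
          (1 / (n : ℂ)) * (n.choose j : ℂ)
            * (ζ ^ ((k - j) * cv) / (1 - ζ ^ cv) ^ (k + 1 - j)) := by
    rw [Finset.sum_comm]
    refine Finset.sum_congr rfl fun j hj => ?_
    rw [Finset.mem_Icc] at hj
    rw [zbar_eq n (fun _ : Fin 1 => k + 1 - j) ζ hζ1]
    have hone : ∀ m : Fin 1 → Fin n,
        (∏ i, ζ ^ (((fun _ : Fin 1 => k + 1 - j) i - 1) * (m i : ℕ))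
          / (1 - ζ ^ (m i : ℕ)) ^ ((fun _ : Fin 1 => k + 1 - j) i))
        = ζ ^ ((k - j) * (m 0 : ℕ)) / (1 - ζ ^ (m 0 : ℕ)) ^ (k + 1 - j) := by
      intro m
      rw [Fin.prod_univ_one]
      simp only
      rw [show k + 1 - j - 1 = k - j from by omega]
    rw [Finset.sum_congr rfl fun m _ => hone m,
      sum_msets_one n (fun cv => ζ ^ ((k - j) * cv) / (1 - ζ ^ cv) ^ (k + 1 - j)),
      Finset.mul_sum]
  rw [LHS1, RHS1]
  refine Finset.sum_congr rfl fun cv hcv => ?_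
  rw [Finset.mem_Ico] at hcv
  rw [← Finset.mul_sum, perC n hn ζ hζ cv hcv.1 hcv.2 r hr hrn, Finset.sum_div,
    Finset.mul_sum]
  refine Finset.sum_congr rfl fun j hj => ?_
  rw [Finset.mem_Icc] at hj
  have hXne : ζ ^ cv ≠ 0 := hx0 cv
  have hWne : 1 - ζ ^ cv ≠ 0 := hx1 cv hcv.1 hcv.2
  have hNne : (n:ℂ) ≠ 0 := Nat.cast_ne_zero.mpr hn.ne'
  have e1 : ζ^((k-1)*cv) = (ζ^cv)^(k-1) := by rw [mul_comm, pow_mul]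
  have e2 : ζ^((k-j)*cv) = (ζ^cv)^(k-j) := by rw [mul_comm, pow_mul]
  rw [e1, e2]
  obtain ⟨j', rfl⟩ : ∃ j', j = j' + 1 := ⟨j - 1, by omega⟩
  obtain ⟨e, rfl⟩ : ∃ e, k = j' + 1 + e := ⟨k - (j'+1), by omega⟩
  rw [show j'+1+e-1 = j'+e from by omega, show j'+1+e-(j'+1) = e from by omega,
    show j'+1+e+1-(j'+1) = e+1 from by omega, show n-1 = (n - (j'+2)) + (j'+1) from by omega,
    show n-(j'+1) = (n - (j'+2)) + 1 from by omega]
  rw [div_mul_div_comm, one_div_mul_eq_div, div_mul_div_comm,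
    div_eq_div_iff
      (mul_ne_zero (pow_ne_zero _ hWne)
        (mul_ne_zero (mul_ne_zero hNne (pow_ne_zero _ hXne)) hWne))
      (mul_ne_zero hNne (pow_ne_zero _ hWne))]
  ring
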